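/- For every continuous function f : ℝ → ℂ and every polynomial p with complex coefficients of degree strictly less than k, one has ‖f(A)b − Q f(T) Qᴴ b‖₂ ≤ ( max_{λ ∈ Λ(A)} |f(λ) − p(λ)| + max_{μ ∈ Λ(T)} |f(μ) − p(μ)| ) ‖b‖₂, where Λ(B) denotes the set of eigenvalues of a Hermitian matrix B. Consequently ‖f(A)b − Q f(T) Qᴴ b‖₂ ≤ 2 ( sup_{x ∈ [λ_min(A), λ_max(A)]} |f(x) − p(x)| ) ‖b‖₂. -/

import Mathlib

open Matrix MeasureTheory

/-- The Euclidean 2-norm of a complex vector. -/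
noncomputable def norm2 {n : ℕ} (v : Fin n → ℂ) : ℝ :=
  Real.sqrt (∑ i, ‖v i‖ ^ 2)

/-- Apply a scalar function to a Hermitian matrix through its spectral decomposition. -/
noncomputable def matFun {m : ℕ} {B : Matrix (Fin m) (Fin m) ℂ}
    (hB : B.IsHermitian) (f : ℝ → ℂ) : Matrix (Fin m) (Fin m) ℂ :=
  (hB.eigenvectorUnitary : Matrix (Fin m) (Fin m) ℂ) *
    Matrix.diagonal (fun i => f (hB.eigenvalues i)) *
    star (hB.eigenvectorUnitary : Matrix (Fin m) (Fin m) ℂ)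

lemma norm2_eq_norm {n : ℕ} (v : Fin n → ℂ) :
    norm2 v = ‖(WithLp.equiv 2 (Fin n → ℂ)).symm v‖ := by
  rw [EuclideanSpace.norm_eq]; rfl

lemma norm2_nonneg {n : ℕ} (v : Fin n → ℂ) : 0 ≤ norm2 v := Real.sqrt_nonneg _

lemma norm2_sub_le {n : ℕ} (u v : Fin n → ℂ) : norm2 (u - v) ≤ norm2 u + norm2 v := by
  simp only [norm2_eq_norm]
  simpa using norm_sub_le ((WithLp.equiv 2 (Fin n → ℂ)).symm u) ((WithLp.equiv 2 (Fin n → ℂ)).symm v)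

lemma norm2_eq_zero {n : ℕ} {v : Fin n → ℂ} (h : norm2 v = 0) : v = 0 := by
  rw [norm2_eq_norm, norm_eq_zero] at h
  simpa using congrArg (WithLp.equiv 2 (Fin n → ℂ)) h

lemma dot_self_re {n : ℕ} (v : Fin n → ℂ) : (star v ⬝ᵥ v).re = ∑ i, ‖v i‖ ^ 2 := by
  simp only [dotProduct, Pi.star_apply, Complex.re_sum]
  refine Finset.sum_congr rfl fun i _ => ?_
  rw [Complex.star_def, mul_comm, Complex.mul_conj]
  rw [Complex.ofReal_re, Complex.normSq_eq_norm_sq]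

lemma norm2_mulVec_isometry {m n : ℕ} (M : Matrix (Fin n) (Fin m) ℂ)
    (h : Mᴴ * M = 1) (v : Fin m → ℂ) : norm2 (M *ᵥ v) = norm2 v := by
  rw [norm2, norm2, ← dot_self_re, ← dot_self_re, star_mulVec, dotProduct_mulVec,
    vecMul_vecMul, h, vecMul_one]

lemma norm2_diag_le {m : ℕ} [NeZero m] (d : Fin m → ℂ) (v : Fin m → ℂ) :
    norm2 (Matrix.diagonal d *ᵥ v) ≤ (⨆ i, ‖d i‖) * norm2 v := by
  set C := ⨆ i, ‖d i‖ with hC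
  have hbdd : BddAbove (Set.range fun i => ‖d i‖) := Set.Finite.bddAbove (Set.finite_range _)
  have hCle : ∀ i, ‖d i‖ ≤ C := fun i => le_ciSup hbdd i
  have hC0 : 0 ≤ C := le_trans (norm_nonneg _) (hCle ⟨0, Nat.pos_of_ne_zero (NeZero.ne m)⟩)
  have h1 : ∑ i, ‖(Matrix.diagonal d *ᵥ v) i‖ ^ 2 ≤ C ^ 2 * ∑ i, ‖v i‖ ^ 2 := by
    rw [Finset.mul_sum]
    refine Finset.sum_le_sum fun i _ => ?_
    rw [mulVec_diagonal, norm_mul, mul_pow]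
    exact mul_le_mul_of_nonneg_right (pow_le_pow_left₀ (norm_nonneg _) (hCle i) 2) (by positivity)
  calc norm2 (Matrix.diagonal d *ᵥ v) ≤ Real.sqrt (C ^ 2 * ∑ i, ‖v i‖ ^ 2) :=
        Real.sqrt_le_sqrt h1
    _ = C * norm2 v := by rw [Real.sqrt_mul (by positivity), Real.sqrt_sq hC0]; rfl

section matFun

variable {m : ℕ} {B : Matrix (Fin m) (Fin m) ℂ}

noncomputable def eigU (hB : B.IsHermitian) : Matrix (Fin m) (Fin m) ℂ :=
  hB.eigenvectorUnitary

lemma star_mul_self_eigU (hB : B.IsHermitian) : star (eigU hB) * (eigU hB) = 1 :=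
  Unitary.coe_star_mul_self _

lemma mul_star_self_eigU (hB : B.IsHermitian) : (eigU hB) * star (eigU hB) = 1 :=
  Unitary.coe_mul_star_self _

lemma matFun_eq (hB : B.IsHermitian) (f : ℝ → ℂ) :
    matFun hB f = eigU hB * Matrix.diagonal (fun i => f (hB.eigenvalues i)) * star (eigU hB) :=
  rfl

lemma spectral (hB : B.IsHermitian) :
    B = eigU hB * Matrix.diagonal (fun i => (hB.eigenvalues i : ℂ)) * star (eigU hB) := by
  exact hB.spectral_theorem

lemma norm2_matFun_le [NeZero m] (hB : B.IsHermitian) (f : ℝ → ℂ) (v : Fin m → ℂ) :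
    norm2 ((matFun hB f) *ᵥ v) ≤ (⨆ i, ‖f (hB.eigenvalues i)‖) * norm2 v := by
  have h1 : (matFun hB f) *ᵥ v
      = eigU hB *ᵥ (Matrix.diagonal (fun i => f (hB.eigenvalues i)) *ᵥ ((star (eigU hB)) *ᵥ v)) := by
    rw [matFun_eq, mulVec_mulVec, mulVec_mulVec, Matrix.mul_assoc]
  rw [h1, norm2_mulVec_isometry _ (by rw [← star_eq_conjTranspose]; exact star_mul_self_eigU hB)]
  calc norm2 (Matrix.diagonal (fun i => f (hB.eigenvalues i)) *ᵥ ((star (eigU hB)) *ᵥ v))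
      ≤ (⨆ i, ‖f (hB.eigenvalues i)‖) * norm2 ((star (eigU hB)) *ᵥ v) := norm2_diag_le _ _
    _ = (⨆ i, ‖f (hB.eigenvalues i)‖) * norm2 v := by
        rw [norm2_mulVec_isometry _ (by
          rw [← star_eq_conjTranspose, star_star]; exact mul_star_self_eigU hB)]

lemma sandwich {m : ℕ} {B : Matrix (Fin m) (Fin m) ℂ} (hB : B.IsHermitian)
    (D E : Matrix (Fin m) (Fin m) ℂ) :
    (eigU hB * D * star (eigU hB)) * (eigU hB * E * star (eigU hB))
      = eigU hB * (D * E) * star (eigU hB) := by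
  simp only [Matrix.mul_assoc]
  congr 1
  congr 1
  rw [← Matrix.mul_assoc, star_mul_self_eigU, Matrix.one_mul]

lemma matFun_sub (hB : B.IsHermitian) (f g : ℝ → ℂ) :
    matFun hB (f - g) = matFun hB f - matFun hB g := by
  simp only [matFun_eq, Pi.sub_apply]
  rw [show (Matrix.diagonal fun i => f (hB.eigenvalues i) - g (hB.eigenvalues i))
      = Matrix.diagonal (fun i => f (hB.eigenvalues i)) - Matrix.diagonal (fun i => g (hB.eigenvalues i)) from
      (Matrix.diagonal_sub _ _).symm,
    Matrix.mul_sub, Matrix.sub_mul]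

lemma matFun_add (hB : B.IsHermitian) (f g : ℝ → ℂ) :
    matFun hB (f + g) = matFun hB f + matFun hB g := by
  simp only [matFun_eq, Pi.add_apply]
  rw [show (Matrix.diagonal fun i => f (hB.eigenvalues i) + g (hB.eigenvalues i))
      = Matrix.diagonal (fun i => f (hB.eigenvalues i)) + Matrix.diagonal (fun i => g (hB.eigenvalues i)) from
      (Matrix.diagonal_add _ _).symm,
    Matrix.mul_add, Matrix.add_mul]

lemma matFun_pow (hB : B.IsHermitian) (j : ℕ) :
    matFun hB (fun x => (x : ℂ) ^ j) = B ^ j := by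
  rw [matFun_eq]
  induction j with
  | zero => simpa [Matrix.diagonal_one] using mul_star_self_eigU hB
  | succ j ih =>
    calc eigU hB * Matrix.diagonal (fun i => ((hB.eigenvalues i : ℝ) : ℂ) ^ (j + 1)) * star (eigU hB)
        = (eigU hB * Matrix.diagonal (fun i => ((hB.eigenvalues i : ℝ) : ℂ) ^ j) * star (eigU hB))
            * (eigU hB * Matrix.diagonal (fun i => ((hB.eigenvalues i : ℝ) : ℂ)) * star (eigU hB)) := by
          rw [sandwich, Matrix.diagonal_mul_diagonal]
          simp only [pow_succ]
      _ = B ^ j * B := by rw [ih, ← spectral hB]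
      _ = B ^ (j + 1) := (pow_succ B j).symm

lemma matFun_poly (hB : B.IsHermitian) (p : Polynomial ℂ) :
    matFun hB (fun x => p.eval (x : ℂ)) = Polynomial.aeval B p := by
  induction p using Polynomial.induction_on' with
  | add p q hp hq =>
    have : (fun x : ℝ => (p + q).eval (x : ℂ))
        = (fun x : ℝ => p.eval (x : ℂ)) + (fun x : ℝ => q.eval (x : ℂ)) := by
      funext x; simp
    rw [this, matFun_add, map_add, hp, hq]
  | monomial j c =>
    have : (fun x : ℝ => ((Polynomial.monomial j) c).eval (x : ℂ))
        = fun x : ℝ => c * (x : ℂ) ^ j := by funext x; simp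
    rw [this]
    have hsmul : matFun hB (fun x : ℝ => c * (x : ℂ) ^ j)
        = c • matFun hB (fun x : ℝ => (x : ℂ) ^ j) := by
      simp only [matFun_eq]
      rw [show (Matrix.diagonal fun i => c * ((hB.eigenvalues i : ℝ) : ℂ) ^ j)
          = c • Matrix.diagonal (fun i => ((hB.eigenvalues i : ℝ) : ℂ) ^ j) by
        rw [← Matrix.diagonal_smul]; rfl]
      rw [Matrix.mul_smul, Matrix.smul_mul]
    rw [hsmul, matFun_pow, Polynomial.aeval_monomial, Algebra.smul_def]

end matFun

section helpers

lemma sum_mulVec' {m l : ℕ} {ι : Type*} (s : Finset ι) (M : ι → Matrix (Fin l) (Fin m) ℂ)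
    (v : Fin m → ℂ) : (∑ i ∈ s, M i) *ᵥ v = ∑ i ∈ s, (M i) *ᵥ v := by
  induction s using Finset.cons_induction with
  | empty => simp [Matrix.zero_mulVec]
  | cons a s ha ih => rw [Finset.sum_cons, Finset.sum_cons, Matrix.add_mulVec, ih]

lemma mulVec_sum' {m l : ℕ} {ι : Type*} (s : Finset ι) (M : Matrix (Fin l) (Fin m) ℂ)
    (v : ι → Fin m → ℂ) : M *ᵥ (∑ i ∈ s, v i) = ∑ i ∈ s, M *ᵥ (v i) := by
  induction s using Finset.cons_induction with
  | empty => simp [Matrix.mulVec_zero]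
  | cons a s ha ih => rw [Finset.sum_cons, Finset.sum_cons, Matrix.mulVec_add, ih]

lemma vecMulVec_mulVec' {m l : ℕ} (q : Fin l → ℂ) (u : Fin m → ℂ) (w : Fin m → ℂ) :
    Matrix.vecMulVec q u *ᵥ w = (u ⬝ᵥ w) • q := by
  funext i
  simp only [Matrix.mulVec, Matrix.vecMulVec_apply, dotProduct, Pi.smul_apply, smul_eq_mul,
    Finset.sum_mul, Finset.mul_sum]
  refine Finset.sum_congr rfl fun c _ => by ring

lemma mul_vecMulVec' {m l r : ℕ} (M : Matrix (Fin r) (Fin l) ℂ) (q : Fin l → ℂ) (u : Fin m → ℂ) :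
    M * Matrix.vecMulVec q u = Matrix.vecMulVec (M *ᵥ q) u := by
  ext i j
  simp only [Matrix.mul_apply, Matrix.vecMulVec_apply, Matrix.mulVec, dotProduct,
    Finset.sum_mul, Finset.mul_sum]
  refine Finset.sum_congr rfl fun c _ => by ring

lemma norm2_smul_real {m : ℕ} (r : ℝ) (v : Fin m → ℂ) : norm2 (r • v) = |r| * norm2 v := by
  have h : ∀ i, ‖(r • v) i‖ ^ 2 = r ^ 2 * ‖v i‖ ^ 2 := by
    intro i
    simp only [Pi.smul_apply, norm_smul, Real.norm_eq_abs, mul_pow, sq_abs]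
  simp only [norm2, h, ← Finset.mul_sum]
  rw [Real.sqrt_mul (by positivity), Real.sqrt_sq_eq_abs]

lemma norm2_single {m : ℕ} (i : Fin m) : norm2 (Pi.single i 1 : Fin m → ℂ) = 1 := by
  rw [norm2]
  have : ∀ j, ‖(Pi.single i 1 : Fin m → ℂ) j‖ ^ 2 = if j = i then 1 else 0 := by
    intro j
    rcases eq_or_ne j i with rfl | h
    · simp
    · simp [Pi.single_eq_of_ne h, h]
  simp only [this, Finset.sum_ite_eq', Finset.mem_univ, if_true, Real.sqrt_one]

lemma rayleigh {m : ℕ} [NeZero m] {B : Matrix (Fin m) (Fin m) ℂ} (hB : B.IsHermitian)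
    (v : Fin m → ℂ) (hv : norm2 v = 1) :
    (⨅ i, hB.eigenvalues i) ≤ (star v ⬝ᵥ (B *ᵥ v)).re ∧
      (star v ⬝ᵥ (B *ᵥ v)).re ≤ ⨆ i, hB.eigenvalues i := by
  set u := star (eigU hB) *ᵥ v with hu
  have hiso : (star (eigU hB))ᴴ * star (eigU hB) = 1 := by
    rw [← star_eq_conjTranspose, star_star]; exact mul_star_self_eigU hB
  have hnu : norm2 u = 1 := by rw [hu, norm2_mulVec_isometry _ hiso, hv]
  have hsum : ∑ i, ‖u i‖ ^ 2 = 1 := by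
    rw [norm2, Real.sqrt_eq_one] at hnu
    exact hnu
  have hstar : star v ᵥ* eigU hB = star u := by
    rw [hu, star_mulVec, ← star_eq_conjTranspose, star_star]
  have hdot : star v ⬝ᵥ (B *ᵥ v)
      = ∑ i, ((hB.eigenvalues i : ℂ)) * (starRingEnd ℂ (u i) * u i) := by
    conv_lhs => rw [spectral hB]
    rw [← Matrix.mulVec_mulVec, ← Matrix.mulVec_mulVec, dotProduct_mulVec, hstar, ← hu,
      dotProduct_mulVec]
    simp only [Matrix.vecMul_diagonal, dotProduct, Pi.star_apply, Complex.star_def]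
    refine Finset.sum_congr rfl fun i _ => by ring
  have hre : (star v ⬝ᵥ (B *ᵥ v)).re = ∑ i, hB.eigenvalues i * ‖u i‖ ^ 2 := by
    rw [hdot, Complex.re_sum]
    refine Finset.sum_congr rfl fun i _ => ?_
    rw [mul_comm ((starRingEnd ℂ) (u i)) (u i), Complex.mul_conj, ← Complex.ofReal_mul,
      Complex.ofReal_re, Complex.normSq_eq_norm_sq]
  have hbb : BddBelow (Set.range hB.eigenvalues) := Set.Finite.bddBelow (Set.finite_range _)
  have hba : BddAbove (Set.range hB.eigenvalues) := Set.Finite.bddAbove (Set.finite_range _)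
  constructor
  · rw [hre]
    calc (⨅ i, hB.eigenvalues i) = (⨅ i, hB.eigenvalues i) * 1 := (mul_one _).symm
      _ = ∑ i, (⨅ j, hB.eigenvalues j) * ‖u i‖ ^ 2 := by rw [← Finset.mul_sum, hsum]
      _ ≤ ∑ i, hB.eigenvalues i * ‖u i‖ ^ 2 :=
          Finset.sum_le_sum fun i _ =>
            mul_le_mul_of_nonneg_right (ciInf_le hbb i) (by positivity)
  · rw [hre]
    calc ∑ i, hB.eigenvalues i * ‖u i‖ ^ 2 ≤ ∑ i, (⨆ j, hB.eigenvalues j) * ‖u i‖ ^ 2 :=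
          Finset.sum_le_sum fun i _ =>
            mul_le_mul_of_nonneg_right (le_ciSup hba i) (by positivity)
      _ = (⨆ i, hB.eigenvalues i) * 1 := by rw [← Finset.mul_sum, hsum]
      _ = ⨆ i, hB.eigenvalues i := mul_one _

end helpers

lemma band {k : ℕ} (T' : Matrix (Fin k) (Fin k) ℂ)
    (htri : ∀ i j : Fin k, (j : ℕ) + 1 < (i : ℕ) → T' i j = 0) :
    ∀ (j : ℕ) (a b : Fin k), (b : ℕ) + j < (a : ℕ) → (T' ^ j) a b = 0 := by
  intro j
  induction j with
  | zero =>
    intro a b h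
    rw [pow_zero, Matrix.one_apply_ne]
    intro hab
    rw [hab] at h
    omega
  | succ j ih =>
    intro a b h
    rw [pow_succ, Matrix.mul_apply]
    refine Finset.sum_eq_zero fun c _ => ?_
    by_cases hc : (c : ℕ) + j < (a : ℕ)
    · rw [ih a c hc, zero_mul]
    · rw [htri c b (by omega), mul_zero]

theorem lanczos_fa_polynomial_bounds
    {n k : ℕ} (hn : 0 < n) (hk : 0 < k)
    (A : Matrix (Fin n) (Fin n) ℂ) (hA : A.IsHermitian)
    (b : Fin n → ℂ) (hb : b ≠ 0)
    (Q : Matrix (Fin n) (Fin k) ℂ) (hQ : Qᴴ * Q = 1)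
    (hQb : Q.mulVec (Pi.single (⟨0, hk⟩ : Fin k) 1) = (norm2 b)⁻¹ • b)
    (T : Matrix (Fin k) (Fin k) ℝ) (hTsymm : T.IsSymm)
    (hTtri : ∀ i j : Fin k, (i : ℕ) + 1 < (j : ℕ) ∨ (j : ℕ) + 1 < (i : ℕ) → T i j = 0)
    (hToff : ∀ i j : Fin k, (i : ℕ) + 1 = (j : ℕ) → 0 < T i j)
    (βk : ℝ) (hβk : 0 < βk)
    (q : Fin n → ℂ) (hq : norm2 q = 1) (hQq : Qᴴ.mulVec q = 0)
    (hAQ : A * Q = Q * T.map Complex.ofReal + (βk : ℂ) •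
      Matrix.vecMulVec q (Pi.single (⟨k - 1, Nat.sub_lt hk Nat.one_pos⟩ : Fin k) 1))
    (hTH : (T.map Complex.ofReal).IsHermitian)
    (f : ℝ → ℂ) (hf : Continuous f)
    (p : Polynomial ℂ) (hp : p.degree < k) :
    norm2 ((matFun hA f).mulVec b - (Q * matFun hTH f * Qᴴ).mulVec b) ≤
        ((⨆ i : Fin n, ‖f (hA.eigenvalues i) - p.eval ((hA.eigenvalues i : ℝ) : ℂ)‖) +
          (⨆ i : Fin k, ‖f (hTH.eigenvalues i) - p.eval ((hTH.eigenvalues i : ℝ) : ℂ)‖)) *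
          norm2 b ∧
      norm2 ((matFun hA f).mulVec b - (Q * matFun hTH f * Qᴴ).mulVec b) ≤
        2 * sSup ((fun x : ℝ => ‖f x - p.eval ((x : ℝ) : ℂ)‖) ''
            Set.Icc (⨅ i : Fin n, hA.eigenvalues i) (⨆ i : Fin n, hA.eigenvalues i)) *
          norm2 b := by
  haveI : NeZero n := ⟨hn.ne'⟩
  haveI : NeZero k := ⟨hk.ne'⟩
  set i0 : Fin k := ⟨0, hk⟩ with hi0
  set il : Fin k := ⟨k - 1, Nat.sub_lt hk Nat.one_pos⟩ with hil
  set e1 : Fin k → ℂ := Pi.single i0 1 with he1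
  set pf : ℝ → ℂ := fun x => p.eval ((x : ℝ) : ℂ) with hpf
  -- basic facts about b
  have hb2 : norm2 b ≠ 0 := fun h => hb (norm2_eq_zero h)
  have hbeq : b = norm2 b • (Q *ᵥ e1) := by
    rw [hQb, smul_smul, mul_inv_cancel₀ hb2, one_smul]
  have hQtb : Qᴴ *ᵥ b = norm2 b • e1 := by
    conv_lhs => rw [hbeq]
    rw [Matrix.mulVec_smul, Matrix.mulVec_mulVec, hQ, Matrix.one_mulVec]
  -- tridiagonal structure
  have htri' : ∀ i j : Fin k, (j : ℕ) + 1 < (i : ℕ) → (T.map Complex.ofReal) i j = 0 := by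
    intro i j h
    rw [Matrix.map_apply, hTtri i j (Or.inr h), Complex.ofReal_zero]
  have hband := band (T.map Complex.ofReal) htri'
  -- Lanczos exactness for monomials
  have hmono : ∀ j : ℕ, j < k →
      (A ^ j) *ᵥ (Q *ᵥ e1) = Q *ᵥ ((T.map Complex.ofReal) ^ j *ᵥ e1) := by
    intro j
    induction j with
    | zero => intro _; rw [pow_zero, pow_zero, Matrix.one_mulVec, Matrix.one_mulVec]
    | succ j ih =>
      intro hjk
      have hj : j < k := by omega
      rw [pow_succ', ← Matrix.mulVec_mulVec, ih hj, Matrix.mulVec_mulVec, hAQ,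
        Matrix.add_mulVec, Matrix.smul_mulVec, vecMulVec_mulVec']
      have hzero : (Pi.single il 1 : Fin k → ℂ) ⬝ᵥ ((T.map Complex.ofReal) ^ j *ᵥ e1) = 0 := by
        have hw : ((T.map Complex.ofReal) ^ j *ᵥ e1) il = 0 := by
          simp only [he1, Matrix.mulVec_single, mul_one, MulOpposite.op_one, one_smul]
          exact hband j il i0 (by simp [hil, hi0]; omega)
        calc (Pi.single il 1 : Fin k → ℂ) ⬝ᵥ ((T.map Complex.ofReal) ^ j *ᵥ e1)
            = ((T.map Complex.ofReal) ^ j *ᵥ e1) il := by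
              simp [dotProduct, Pi.single_apply]
          _ = 0 := hw
      rw [hzero, zero_smul, smul_zero, add_zero,
        ← Matrix.mulVec_mulVec ((T.map Complex.ofReal) ^ j *ᵥ e1) Q (T.map Complex.ofReal),
        Matrix.mulVec_mulVec e1 (T.map Complex.ofReal) ((T.map Complex.ofReal) ^ j),
        ← pow_succ']
  -- Lanczos exactness for the polynomial p
  have hnd : p.natDegree < k := by
    rcases eq_or_ne p 0 with rfl | h
    · simpa using hk
    · exact (Polynomial.natDegree_lt_iff_degree_lt h).2 (by exact_mod_cast hp)
  have heval : (Polynomial.aeval A p) *ᵥ (Q *ᵥ e1)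
      = Q *ᵥ ((Polynomial.aeval (T.map Complex.ofReal) p) *ᵥ e1) := by
    rw [Polynomial.aeval_eq_sum_range' hnd A,
      Polynomial.aeval_eq_sum_range' hnd (T.map Complex.ofReal),
      sum_mulVec', sum_mulVec', mulVec_sum']
    refine Finset.sum_congr rfl fun j hj => ?_
    rw [Matrix.smul_mulVec, Matrix.smul_mulVec,
      hmono j (Finset.mem_range.1 hj), Matrix.mulVec_smul]
  have hpoly : (Polynomial.aeval A p) *ᵥ b
      = (Q * Polynomial.aeval (T.map Complex.ofReal) p * Qᴴ) *ᵥ b := by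
    have hR : (Q * Polynomial.aeval (T.map Complex.ofReal) p * Qᴴ) *ᵥ b
        = norm2 b • (Q *ᵥ ((Polynomial.aeval (T.map Complex.ofReal) p) *ᵥ e1)) := by
      rw [← Matrix.mulVec_mulVec, ← Matrix.mulVec_mulVec, hQtb, Matrix.mulVec_smul,
        Matrix.mulVec_smul]
    rw [hR]
    conv_lhs => rw [hbeq]
    rw [Matrix.mulVec_smul, heval]
  -- rewrite the error using f - pf
  have hkey : (matFun hA f) *ᵥ b - (Q * matFun hTH f * Qᴴ) *ᵥ b
      = (matFun hA (f - pf)) *ᵥ b - (Q * matFun hTH (f - pf) * Qᴴ) *ᵥ b := by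
    rw [matFun_sub, matFun_sub, matFun_poly hA, matFun_poly hTH,
      Matrix.sub_mulVec, Matrix.mul_sub, Matrix.sub_mul, Matrix.sub_mulVec, hpoly]
    abel
  -- norm bounds
  have hQtbnorm : norm2 (Qᴴ *ᵥ b) = norm2 b := by
    rw [hQtb, norm2_smul_real, norm2_single, mul_one, abs_of_nonneg (norm2_nonneg b)]
  have h1 : norm2 ((matFun hA (f - pf)) *ᵥ b)
      ≤ (⨆ i : Fin n, ‖f (hA.eigenvalues i) - p.eval ((hA.eigenvalues i : ℝ) : ℂ)‖) * norm2 b := by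
    simpa [Pi.sub_apply] using norm2_matFun_le hA (f - pf) b
  have h2 : norm2 ((Q * matFun hTH (f - pf) * Qᴴ) *ᵥ b)
      ≤ (⨆ i : Fin k, ‖f (hTH.eigenvalues i) - p.eval ((hTH.eigenvalues i : ℝ) : ℂ)‖) * norm2 b := by
    have hsplit : (Q * matFun hTH (f - pf) * Qᴴ) *ᵥ b
        = Q *ᵥ ((matFun hTH (f - pf)) *ᵥ (Qᴴ *ᵥ b)) := by
      rw [Matrix.mulVec_mulVec, Matrix.mulVec_mulVec, Matrix.mul_assoc]
    rw [hsplit, norm2_mulVec_isometry Q hQ]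
    calc norm2 ((matFun hTH (f - pf)) *ᵥ (Qᴴ *ᵥ b))
        ≤ (⨆ i : Fin k, ‖(f - pf) (hTH.eigenvalues i)‖) * norm2 (Qᴴ *ᵥ b) :=
          norm2_matFun_le hTH (f - pf) (Qᴴ *ᵥ b)
      _ = (⨆ i : Fin k, ‖f (hTH.eigenvalues i) - p.eval ((hTH.eigenvalues i : ℝ) : ℂ)‖) * norm2 b := by
          rw [hQtbnorm]
          simp only [Pi.sub_apply, hpf]
  have bound1 : norm2 ((matFun hA f).mulVec b - (Q * matFun hTH f * Qᴴ).mulVec b) ≤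
      ((⨆ i : Fin n, ‖f (hA.eigenvalues i) - p.eval ((hA.eigenvalues i : ℝ) : ℂ)‖) +
        (⨆ i : Fin k, ‖f (hTH.eigenvalues i) - p.eval ((hTH.eigenvalues i : ℝ) : ℂ)‖)) * norm2 b := by
    rw [hkey, add_mul]
    exact le_trans (norm2_sub_le _ _) (add_le_add h1 h2)
  refine ⟨bound1, ?_⟩
  -- second bound
  set a0 := ⨅ i : Fin n, hA.eigenvalues i with ha0
  set b0 := ⨆ i : Fin n, hA.eigenvalues i with hb0
  have hbbA : BddBelow (Set.range hA.eigenvalues) := Set.Finite.bddBelow (Set.finite_range _)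
  have hbaA : BddAbove (Set.range hA.eigenvalues) := Set.Finite.bddAbove (Set.finite_range _)
  have hAin : ∀ i : Fin n, hA.eigenvalues i ∈ Set.Icc a0 b0 :=
    fun i => ⟨ciInf_le hbbA i, le_ciSup hbaA i⟩
  have hQAQ : Qᴴ * A * Q = T.map Complex.ofReal := by
    rw [Matrix.mul_assoc, hAQ, Matrix.mul_add, ← Matrix.mul_assoc, hQ, Matrix.one_mul,
      Matrix.mul_smul, mul_vecMulVec', hQq]
    ext i j
    simp [Matrix.add_apply, Matrix.smul_apply, Matrix.vecMulVec_apply]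
  have hTin : ∀ i : Fin k, hTH.eigenvalues i ∈ Set.Icc a0 b0 := by
    intro i
    set w := (WithLp.equiv 2 (Fin k → ℂ)) (hTH.eigenvectorBasis i) with hw
    have hnw : norm2 w = 1 := by
      rw [norm2_eq_norm]
      rw [show (WithLp.equiv 2 (Fin k → ℂ)).symm w = hTH.eigenvectorBasis i from
        (WithLp.equiv 2 (Fin k → ℂ)).symm_apply_apply _]
      exact hTH.eigenvectorBasis.orthonormal.1 i
    have hsumw : (star w ⬝ᵥ w).re = 1 := by
      rw [dot_self_re]
      rw [norm2, Real.sqrt_eq_one] at hnw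
      exact hnw
    have hmw : (T.map Complex.ofReal) *ᵥ w = hTH.eigenvalues i • w :=
      hTH.mulVec_eigenvectorBasis i
    have hnv : norm2 (Q *ᵥ w) = 1 := by rw [norm2_mulVec_isometry Q hQ, hnw]
    have hray := rayleigh hA (Q *ᵥ w) hnv
    have hcompute : (star (Q *ᵥ w) ⬝ᵥ (A *ᵥ (Q *ᵥ w))).re = hTH.eigenvalues i := by
      rw [Matrix.mulVec_mulVec, star_mulVec, dotProduct_mulVec, vecMul_vecMul,
        ← Matrix.mul_assoc, hQAQ, ← dotProduct_mulVec, hmw, dotProduct_smul,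
        Complex.smul_re, hsumw, smul_eq_mul, mul_one]
    rw [hcompute] at hray
    exact ⟨hray.1, hray.2⟩
  -- sup over the interval
  set g : ℝ → ℝ := fun x => ‖f x - p.eval ((x : ℝ) : ℂ)‖ with hg
  have hgc : Continuous g :=
    (hf.sub ((Polynomial.continuous p).comp Complex.continuous_ofReal)).norm
  have hbddS : BddAbove (g '' Set.Icc a0 b0) := (isCompact_Icc.image hgc).bddAbove
  have hleS : ∀ x ∈ Set.Icc a0 b0, g x ≤ sSup (g '' Set.Icc a0 b0) :=
    fun x hx => le_csSup hbddS ⟨x, hx, rfl⟩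
  have hsupA : (⨆ i : Fin n, ‖f (hA.eigenvalues i) - p.eval ((hA.eigenvalues i : ℝ) : ℂ)‖)
      ≤ sSup (g '' Set.Icc a0 b0) := ciSup_le fun i => hleS _ (hAin i)
  have hsupT : (⨆ i : Fin k, ‖f (hTH.eigenvalues i) - p.eval ((hTH.eigenvalues i : ℝ) : ℂ)‖)
      ≤ sSup (g '' Set.Icc a0 b0) := ciSup_le fun i => hleS _ (hTin i)
  refine le_trans bound1 ?_
  rw [show (2 : ℝ) * sSup (g '' Set.Icc a0 b0) = sSup (g '' Set.Icc a0 b0) + sSup (g '' Set.Icc a0 b0) from two_mul _]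
  exact mul_le_mul_of_nonneg_right (add_le_add hsupA hsupT) (norm2_nonneg b)
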